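/- For every infinite word ω with letter frequencies, the balance B(ω) and the discrepancy Δ(ω) satisfy Δ(ω) ≤ B(ω) ≤ 4·Δ(ω). In particular, ω is finitely balanced if and only if it has finite discrepancy. -/

import Mathlib

open scoped ENNReal

def prefixW {A : Type*} (w : ℕ → A) (n : ℕ) : List A := (List.range n).map w

def IsFactor {A : Type*} (w : ℕ → A) (u : List A) : Prop :=
  ∃ k, u = (List.range u.length).map (fun t => w (k + t))

def applySub {A : Type*} (σ : A → List A) (w : List A) : List A := w.flatMap σ

def SubstOfInf {A : Type*} (σ : A → List A) (w' w : ℕ → A) : Prop :=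
  ∀ m, prefixW w (applySub σ (prefixW w' m)).length = applySub σ (prefixW w' m)

def FactorOfImage {A : Type*} (σ : A → List A) (ω : ℕ → A) (u : List A) : Prop :=
  ∃ w, IsFactor ω w ∧ u <:+: applySub σ w

def BalancedWord {A : Type*} [DecidableEq A] (C : ℕ) (w : ℕ → A) : Prop :=
  ∀ u v, IsFactor w u → IsFactor w v → u.length = v.length →
    ∀ i, |(u.count i : ℤ) - (v.count i : ℤ)| ≤ (C : ℤ)

noncomputable def BalanceE {A : Type*} [DecidableEq A] (ω : ℕ → A) : ℝ≥0∞ :=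
  ⨆ (p : {p : List A × List A // IsFactor ω p.1 ∧ IsFactor ω p.2 ∧ p.1.length = p.2.length})
    (i : A), (((p.1.1.count i : ℤ) - (p.1.2.count i : ℤ)).natAbs : ℝ≥0∞)

noncomputable def DiscE {A : Type*} [DecidableEq A] (ω : ℕ → A) (f : A → ℝ) : ℝ≥0∞ :=
  ⨆ (i : A) (n : ℕ), ENNReal.ofReal |((prefixW ω n).count i : ℝ) - (n : ℝ) * f i|

section Helpers
variable {A : Type*} [DecidableEq A]

lemma prefix_count_add (ω : ℕ → A) (i : A) (k n : ℕ) :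
    (prefixW ω (k+n)).count i
      = (prefixW ω k).count i + ((List.range n).map (fun t => ω (k+t))).count i := by
  simp only [prefixW, List.range_add, List.map_append, List.count_append, List.map_map]
  rfl

lemma isFactor_shift (ω : ℕ → A) (k n : ℕ) :
    IsFactor ω ((List.range n).map (fun t => ω (k+t))) := ⟨k, by simp⟩

lemma isFactor_prefix (ω : ℕ → A) (n : ℕ) : IsFactor ω (prefixW ω n) :=
  ⟨0, by simp [prefixW]⟩

lemma balance_bound (ω : ℕ → A) {u v : List A} (hu : IsFactor ω u) (hv : IsFactor ω v)
    (h : u.length = v.length) (i : A) :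
    ((((u.count i : ℤ) - (v.count i : ℤ)).natAbs : ℝ≥0∞)) ≤ BalanceE ω := by
  have := le_iSup (fun (p : {p : List A × List A // IsFactor ω p.1 ∧ IsFactor ω p.2 ∧ p.1.length = p.2.length}) =>
    ⨆ (i : A), (((p.1.1.count i : ℤ) - (p.1.2.count i : ℤ)).natAbs : ℝ≥0∞)) ⟨(u,v), hu, hv, h⟩
  refine le_trans ?_ this
  exact le_iSup (fun (i : A) => ((((⟨(u,v),hu,hv,h⟩ : {p : List A × List A // IsFactor ω p.1 ∧ IsFactor ω p.2 ∧ p.1.length = p.2.length}).1.1.count i : ℤ) - ((⟨(u,v),hu,hv,h⟩ : {p : List A × List A // IsFactor ω p.1 ∧ IsFactor ω p.2 ∧ p.1.length = p.2.length}).1.2.count i : ℤ)).natAbs : ℝ≥0∞)) i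

lemma disc_bound (ω : ℕ → A) (f : A → ℝ) (i : A) (n : ℕ) :
    ENNReal.ofReal |((prefixW ω n).count i : ℝ) - (n : ℝ) * f i| ≤ DiscE ω f := by
  have := le_iSup (fun (i : A) => ⨆ (n : ℕ),
    ENNReal.ofReal |((prefixW ω n).count i : ℝ) - (n : ℝ) * f i|) i
  exact le_trans (le_iSup (fun (n : ℕ) => ENNReal.ofReal |((prefixW ω n).count i : ℝ) - (n : ℝ) * f i|) n) this

end Helpers

lemma part1 {A : Type*} [DecidableEq A] (ω : ℕ → A) (f : A → ℝ)
    (hf : ∀ i : A, Filter.Tendsto (fun n => (((prefixW ω n).count i : ℝ) / (n : ℝ)))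
      Filter.atTop (nhds (f i))) : DiscE ω f ≤ BalanceE ω := by
  by_cases hB : BalanceE ω = ⊤
  · simp [hB]
  refine iSup₂_le fun i n => ?_
  set C := (BalanceE ω).toReal with hCdef
  set c : ℕ → ℕ := fun m => (prefixW ω m).count i with hc
  rcases Nat.eq_zero_or_pos n with hn | hn
  · simp [hn, prefixW]
  have hn0 : (0:ℝ) < (n:ℝ) := by exact_mod_cast hn
  have key : ∀ k, |((c (k+n) : ℝ)) - (c k : ℝ) - (c n : ℝ)| ≤ C := by
    intro k
    have h1 := balance_bound ω (isFactor_shift ω k n) (isFactor_prefix ω n)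
      (by simp [prefixW]) i
    have h2 := ENNReal.toReal_mono hB h1
    rw [ENNReal.toReal_natCast] at h2
    rw [Nat.cast_natAbs (α := ℝ)] at h2
    push_cast at h2
    have h3 := prefix_count_add ω i k n
    have h4 : ((List.count i (List.map (fun t => ω (k + t)) (List.range n)) : ℝ))
        = (c (k+n) : ℝ) - c k := by
      rw [hc]; push_cast [h3]; ring
    rw [h4] at h2
    convert h2 using 2
  have key2 : ∀ k : ℕ, |((c (k*n) : ℝ)) - (k:ℝ) * (c n : ℝ)| ≤ (k:ℝ) * C := by
    intro k
    induction k with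
    | zero => simp [hc, prefixW]
    | succ k ih =>
      have h := key (k*n)
      have he : (k+1)*n = k*n + n := by ring
      have : ((c ((k+1)*n) : ℝ)) - ((k:ℝ)+1) * (c n : ℝ)
          = (((c (k*n+n) : ℝ)) - (c (k*n) : ℝ) - (c n : ℝ))
            + (((c (k*n) : ℝ)) - (k:ℝ) * (c n : ℝ)) := by
        rw [he]; ring
      push_cast
      rw [this]
      calc _ ≤ |((c (k*n+n) : ℝ)) - (c (k*n) : ℝ) - (c n : ℝ)|
            + |((c (k*n) : ℝ)) - (k:ℝ) * (c n : ℝ)| := abs_add_le _ _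
        _ ≤ C + (k:ℝ) * C := add_le_add h ih
        _ = ((k:ℝ)+1) * C := by ring
  have hmono : Filter.Tendsto (fun k : ℕ => k * n) Filter.atTop Filter.atTop :=
    Filter.tendsto_atTop_mono (fun k => Nat.le_mul_of_pos_right k hn) Filter.tendsto_id
  have hlim : Filter.Tendsto (fun k : ℕ => (c (k*n) : ℝ) / ((k*n : ℕ):ℝ))
      Filter.atTop (nhds (f i)) := (hf i).comp hmono
  have hbound : ∀ᶠ k in Filter.atTop,
      |(c (k*n) : ℝ)/((k*n : ℕ):ℝ) - (c n : ℝ)/(n:ℝ)| ≤ C / n := by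
    filter_upwards [Filter.eventually_ge_atTop 1] with k hk
    have hk0 : (0:ℝ) < (k:ℝ) := by exact_mod_cast hk
    have heq : (c (k*n) : ℝ)/((k*n : ℕ):ℝ) - (c n : ℝ)/(n:ℝ)
        = ((c (k*n) : ℝ) - (k:ℝ) * (c n : ℝ)) / ((k:ℝ)*(n:ℝ)) := by
      push_cast; field_simp
    rw [heq, abs_div, abs_of_pos (mul_pos hk0 hn0)]
    rw [div_le_div_iff₀ (mul_pos hk0 hn0) hn0]
    calc |((c (k*n) : ℝ)) - (k:ℝ) * (c n : ℝ)| * (n:ℝ) ≤ ((k:ℝ) * C) * (n:ℝ) :=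
          mul_le_mul_of_nonneg_right (key2 k) (le_of_lt hn0)
      _ = C * ((k:ℝ)*(n:ℝ)) := by ring
  have habs : Filter.Tendsto (fun k : ℕ => |(c (k*n) : ℝ)/((k*n : ℕ):ℝ) - (c n : ℝ)/(n:ℝ)|)
      Filter.atTop (nhds (|f i - (c n : ℝ)/(n:ℝ)|)) :=
    (hlim.sub tendsto_const_nhds).abs
  have hfin : |f i - (c n : ℝ)/(n:ℝ)| ≤ C / n := le_of_tendsto habs hbound
  have hfin2 : |(c n : ℝ) - (n:ℝ) * f i| ≤ C := by
    have heq2 : (c n : ℝ) - (n:ℝ) * f i = -((n:ℝ) * (f i - (c n : ℝ)/(n:ℝ))) := by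
      field_simp
      ring
    rw [heq2, abs_neg, abs_mul, abs_of_pos hn0]
    calc (n:ℝ) * |f i - (c n : ℝ)/(n:ℝ)| ≤ (n:ℝ) * (C/(n:ℝ)) :=
        mul_le_mul_of_nonneg_left hfin (le_of_lt hn0)
      _ = C := by field_simp
  calc ENNReal.ofReal |((prefixW ω n).count i : ℝ) - (n:ℝ) * f i| ≤ ENNReal.ofReal C :=
      ENNReal.ofReal_le_ofReal hfin2
    _ = BalanceE ω := ENNReal.ofReal_toReal hB

lemma part2 {A : Type*} [DecidableEq A] (ω : ℕ → A) (f : A → ℝ) :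
    BalanceE ω ≤ 4 * DiscE ω f := by
  by_cases hD : DiscE ω f = ⊤
  · rw [hD]
    simp [ENNReal.mul_top]
  refine iSup₂_le fun p i => ?_
  obtain ⟨⟨u,v⟩, hu, hv, hlen⟩ := p
  simp only at hlen ⊢
  set D := (DiscE ω f).toReal with hDdef
  have hd : ∀ (j : A) (m : ℕ), |((prefixW ω m).count j : ℝ) - (m:ℝ) * f j| ≤ D := by
    intro j m
    have h := disc_bound ω f j m
    exact (ENNReal.ofReal_le_iff_le_toReal hD).mp h
  have hfac : ∀ (w : List A), IsFactor ω w →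
      |((w.count i : ℝ)) - (w.length : ℝ) * f i| ≤ 2 * D := by
    intro w hw
    obtain ⟨k, hk⟩ := hw
    have hcnt : (w.count i : ℝ) = ((prefixW ω (k + w.length)).count i : ℝ)
        - ((prefixW ω k).count i : ℝ) := by
      have h3 := prefix_count_add ω i k w.length
      have h4 : w.count i = ((List.range w.length).map (fun t => ω (k+t))).count i := by
        conv_lhs => rw [hk]
      rw [h4]
      push_cast [h3]
      ring
    have h1 := hd i (k + w.length)
    have h2 := hd i k
    rw [hcnt]
    have : ((prefixW ω (k + w.length)).count i : ℝ) - ((prefixW ω k).count i : ℝ)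
        - (w.length : ℝ) * f i
        = (((prefixW ω (k + w.length)).count i : ℝ) - ((k:ℝ) + w.length) * f i)
          - (((prefixW ω k).count i : ℝ) - (k:ℝ) * f i) := by
      push_cast
      ring
    rw [this]
    calc _ ≤ |((prefixW ω (k + w.length)).count i : ℝ) - ((k:ℝ) + (w.length:ℝ)) * f i|
          + |((prefixW ω k).count i : ℝ) - (k:ℝ) * f i| := abs_sub _ _
      _ ≤ D + D := by
          refine add_le_add ?_ h2
          have := h1
          push_cast at this ⊢
          exact this
      _ = 2 * D := by ring
  have hu2 := hfac u hu
  have hv2 := hfac v hv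
  rw [hlen] at hu2
  have htot : |((u.count i : ℝ)) - ((v.count i : ℝ))| ≤ 4 * D := by
    have : ((u.count i : ℝ)) - ((v.count i : ℝ))
        = (((u.count i : ℝ)) - (v.length : ℝ) * f i)
          - (((v.count i : ℝ)) - (v.length : ℝ) * f i) := by ring
    rw [this]
    calc _ ≤ |((u.count i : ℝ)) - (v.length : ℝ) * f i|
          + |((v.count i : ℝ)) - (v.length : ℝ) * f i| := abs_sub _ _
      _ ≤ 2 * D + 2 * D := add_le_add hu2 hv2
      _ = 4 * D := by ring
  have hcast : ((((u.count i : ℤ) - (v.count i : ℤ)).natAbs : ℝ))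
      = |((u.count i : ℝ)) - ((v.count i : ℝ))| := by
    rw [Nat.cast_natAbs (α := ℝ)]
    push_cast
    ring_nf
  calc ((((u.count i : ℤ) - (v.count i : ℤ)).natAbs : ℝ≥0∞))
      = ENNReal.ofReal ((((u.count i : ℤ) - (v.count i : ℤ)).natAbs : ℝ)) := by
        rw [ENNReal.ofReal_natCast]
    _ ≤ ENNReal.ofReal (4 * D) := by
        rw [hcast]
        exact ENNReal.ofReal_le_ofReal htot
    _ = 4 * DiscE ω f := by
        rw [ENNReal.ofReal_mul (by norm_num)]
        rw [ENNReal.ofReal_toReal hD]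
        norm_num

theorem stmt2 {A : Type*} [Fintype A] [DecidableEq A] (ω : ℕ → A) (f : A → ℝ)
    (hf : ∀ i : A, Filter.Tendsto (fun n => (((prefixW ω n).count i : ℝ) / (n : ℝ)))
      Filter.atTop (nhds (f i))) :
    DiscE ω f ≤ BalanceE ω ∧ BalanceE ω ≤ 4 * DiscE ω f ∧
      (BalanceE ω < ⊤ ↔ DiscE ω f < ⊤) := by
  refine ⟨part1 ω f hf, part2 ω f, ?_⟩
  constructor
  · intro h
    exact lt_of_le_of_lt (part1 ω f hf) h
  · intro h
    refine lt_of_le_of_lt (part2 ω f) ?_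
    exact ENNReal.mul_lt_top (by norm_num) h
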